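/- Let R be a commutative ring, f₁, …, f_k ∈ R^×, and let I, J be ideals of R with I ∩ J = (0). Then the exponent lattice of (f₁,…,f_k) in R equals the intersection of the exponent lattice of their images in R/I with the exponent lattice of their images in R/J. -/
import Mathlib


/-- If `I ∩ J = (0)`, then the exponent lattice in `R` is the intersection of the exponent
lattices in `R/I` and `R/J`. -/
theorem stmt16 {R : Type*} [CommRing R] (k : ℕ) (f : Fin k → Rˣ)
    (I J : Ideal R) (h : I ⊓ J = ⊥) :
    {a : Fin k → ℤ | ∏ i, f i ^ a i = 1} =
      {a : Fin k → ℤ |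
          ∏ i, (Units.map (Ideal.Quotient.mk I).toMonoidHom (f i)) ^ a i = 1} ∩
      {a : Fin k → ℤ |
          ∏ i, (Units.map (Ideal.Quotient.mk J).toMonoidHom (f i)) ^ a i = 1} := by
  ext a
  simp only [Set.mem_setOf_eq, Set.mem_inter_iff]
  have key : ∀ K : Ideal R,
      (∏ i, (Units.map (Ideal.Quotient.mk K).toMonoidHom (f i)) ^ a i = 1) ↔
      ((∏ i, f i ^ a i : Rˣ) : R) - 1 ∈ K := by
    intro K
    have : ∏ i, (Units.map (Ideal.Quotient.mk K).toMonoidHom (f i)) ^ a i =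
        Units.map (Ideal.Quotient.mk K).toMonoidHom (∏ i, f i ^ a i) := by
      rw [map_prod]
      simp [map_zpow]
    rw [this]
    constructor
    · intro h1
      have := congrArg (Units.val) h1
      simp only [Units.coe_map, RingHom.toMonoidHom_eq_coe, MonoidHom.coe_coe,
        Units.val_one] at this
      rw [show (1 : R ⧸ K) = Ideal.Quotient.mk K 1 from (map_one _).symm] at this
      exact Ideal.Quotient.eq.mp this
    · intro h1
      ext
      simp only [Units.coe_map, RingHom.toMonoidHom_eq_coe, MonoidHom.coe_coe, Units.val_one]
      rw [← sub_eq_zero, ← map_one (Ideal.Quotient.mk K), ← map_sub]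
      exact Ideal.Quotient.eq_zero_iff_mem.mpr h1
  rw [key I, key J]
  constructor
  · intro h1; rw [h1]; simp
  · rintro ⟨h1, h2⟩
    have : ((∏ i, f i ^ a i : Rˣ) : R) - 1 = 0 := by
      have : ((∏ i, f i ^ a i : Rˣ) : R) - 1 ∈ I ⊓ J := ⟨h1, h2⟩
      rwa [h, Ideal.mem_bot] at this
    ext
    simpa [sub_eq_zero] using this
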